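/- Let f^p be a generalized median voter scheme given by a monotonic family of fixed ballots p = {p_S}_{S ⊆ N}. For agent i with p_{N\{i}} ≤ p_{{i}}, the option set of P_i is: {t(P_i),...,p_{{i}}} if t(P_i) < p_{N\{i}}; {p_{N\{i}},...,p_{{i}}} if p_{N\{i}} ≤ t(P_i) ≤ p_{{i}}; and {p_{N\{i}},...,t(P_i)} if t(P_i) > p_{{i}}. -/
import Mathlib


/-- A preference profile: each agent `i : Fin n` has a strict preference,
modeled as a linear order on the set of alternatives `X`. -/
abbrev Profile (n : ℕ) (X : Type*) := Fin n → LinearOrder X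

/-- The top (best) alternative of a preference `L`. -/
noncomputable def top {X : Type*} [Fintype X] [Nonempty X] (L : LinearOrder X) : X :=
  @Finset.max' X L Finset.univ Finset.univ_nonempty

/-- `x` is strictly preferred to `y` according to `L`. -/
def prefers {X : Type*} (L : LinearOrder X) (x y : X) : Prop := L.lt y x

/-- The option set left open by preference `L` of agent `i` at rule `f`. -/
def OptionSet {n : ℕ} {X : Type*} (f : Profile n X → X) (i : Fin n) (L : LinearOrder X) :
    Set X :=
  {x | ∃ P : Profile n X, P i = L ∧ f P = x}

/-- `Li'` is a profitable manipulation of `f` at (true preference) `Li` for agent `i`. -/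
def IsManip {n : ℕ} {X : Type*} (f : Profile n X → X) (i : Fin n)
    (Li Li' : LinearOrder X) : Prop :=
  ∃ P : Profile n X, P i = Li ∧ prefers Li (f (Function.update P i Li')) (f P)

/-- The worst element of `O(Li')` is strictly `Li`-preferred to the worst element of `O(Li)`.
For nonempty finite option sets this is equivalent to: some element of `O(Li)` is strictly
worse (w.r.t. `Li`) than every element of `O(Li')`. -/
def WorstImproves {n : ℕ} {X : Type*} (f : Profile n X → X) (i : Fin n)
    (Li Li' : LinearOrder X) : Prop :=
  ∃ w ∈ OptionSet f i Li, ∀ w' ∈ OptionSet f i Li', prefers Li w' w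

/-- The best element of `O(Li')` is strictly `Li`-preferred to the best element of `O(Li)`.
For nonempty finite option sets this is equivalent to: some element of `O(Li')` is strictly
better (w.r.t. `Li`) than every element of `O(Li)`. -/
def BestImproves {n : ℕ} {X : Type*} (f : Profile n X → X) (i : Fin n)
    (Li Li' : LinearOrder X) : Prop :=
  ∃ b' ∈ OptionSet f i Li', ∀ b ∈ OptionSet f i Li, prefers Li b' b

/-- `Li'` is an obvious manipulation of `f` at `Li` for agent `i`. -/
def IsObviousManip {n : ℕ} {X : Type*} (f : Profile n X → X) (i : Fin n)
    (Li Li' : LinearOrder X) : Prop :=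
  IsManip f i Li Li' ∧ (WorstImproves f i Li Li' ∨ BestImproves f i Li Li')

/-- `f` is not obviously manipulable. -/
def NOM {n : ℕ} {X : Type*} (f : Profile n X → X) : Prop :=
  ∀ (i : Fin n) (Li Li' : LinearOrder X), ¬ IsObviousManip f i Li Li'

/-- `f` is tops-only. -/
def TopsOnly {n : ℕ} {X : Type*} [Fintype X] [Nonempty X] (f : Profile n X → X) : Prop :=
  ∀ P P' : Profile n X, (∀ i, top (P i) = top (P' i)) → f P = f P'

/-- The set `V_i` of alternatives that agent `i` vetoes via some preference. -/
def VetoSet {n : ℕ} {X : Type*} (f : Profile n X → X) (i : Fin n) : Set X :=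
  {x | ∃ L : LinearOrder X, x ∉ OptionSet f i L}

/-- The set `SV_i` of alternatives strongly vetoed by agent `i`:
`x` is vetoed via `L` precisely when the top of `L` differs from `x`. -/
def StrongVetoSet {n : ℕ} {X : Type*} [Fintype X] [Nonempty X]
    (f : Profile n X → X) (i : Fin n) : Set X :=
  {x | ∀ L : LinearOrder X, x ∉ OptionSet f i L ↔ top L ≠ x}

/-- `f` is dictatorial: some agent's top alternative is always selected. -/
def Dictatorial {n : ℕ} {X : Type*} [Fintype X] [Nonempty X]
    (f : Profile n X → X) : Prop :=
  ∃ i : Fin n, ∀ P : Profile n X, f P = top (P i)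

/-- The ordered set of alternatives `X = {a, a+1, ..., b} ⊆ ℕ`. -/
abbrev Alt (a b : ℕ) : Type := {x : ℕ // x ∈ Finset.Icc a b}

/-- `p` is a monotonic family of fixed ballots: `p_N = a`, `p_∅ = b`, and
`S ⊆ T` implies `p_T ≤ p_S`. -/
def MonotonicFamily {n a b : ℕ} (p : Finset (Fin n) → Alt a b) : Prop :=
  (p Finset.univ).val = a ∧ (p ∅).val = b ∧
    ∀ S T : Finset (Fin n), S ⊆ T → p T ≤ p S

/-- The generalized median voter scheme associated with the family `p`:
`f^p(P) = min_{S ⊆ N} max_{j ∈ S} {t(P_j), p_S}`. -/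
noncomputable def gms {n a b : ℕ} [Nonempty (Alt a b)]
    (p : Finset (Fin n) → Alt a b) (P : Profile n (Alt a b)) : Alt a b :=
  Finset.univ.inf' ⟨∅, Finset.mem_univ _⟩ fun S : Finset (Fin n) =>
    (insert (p S) (S.image fun j => top (P j))).max' (Finset.insert_nonempty _ _)

section Helpers

lemma top_eq {X : Type*} [Fintype X] [Nonempty X] (M : LinearOrder X) (z : X)
    (h : ∀ w, M.le w z) : top M = z := by
  unfold top
  refine @le_antisymm _ M.toPartialOrder _ _ ?_ ?_
  · exact @Finset.max'_le X M Finset.univ _ z (fun y _ => h y)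
  · exact @Finset.le_max' X M Finset.univ z (Finset.mem_univ z)

noncomputable def ordTop {a b : ℕ} (x : Alt a b) : LinearOrder (Alt a b) :=
  LinearOrder.lift' (fun z : Alt a b => if z = x then b + 1 else z.val) (by
    intro z w h
    have hz2 := z.2; have hw2 := w.2
    simp only [Finset.mem_Icc] at hz2 hw2
    by_cases hz : z = x <;> by_cases hw : w = x
    · rw [hz, hw]
    · simp only [if_pos hz, if_neg hw] at h; omega
    · simp only [if_neg hz, if_pos hw] at h; omega
    · simp only [if_neg hz, if_neg hw] at h; exact Subtype.ext h)

lemma ordTop_top {a b : ℕ} [Nonempty (Alt a b)] (x : Alt a b) : top (ordTop x) = x := by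
  apply top_eq
  intro w
  show (if w = x then b + 1 else w.val) ≤ (if x = x then b + 1 else x.val)
  have := w.2
  simp only [Finset.mem_Icc] at this
  split
  · simp
  · simp; omega

variable {n a b : ℕ} [Nonempty (Alt a b)]

/-- The value of a single ballot term. -/
noncomputable def bval (p : Finset (Fin n) → Alt a b) (P : Profile n (Alt a b))
    (S : Finset (Fin n)) : Alt a b :=
  (insert (p S) (S.image fun j => top (P j))).max' (Finset.insert_nonempty _ _)

lemma gms_le_bval (p : Finset (Fin n) → Alt a b) (P : Profile n (Alt a b))
    (S : Finset (Fin n)) : (gms p P).val ≤ (bval p P S).val := by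
  show gms p P ≤ bval p P S
  unfold gms bval
  exact Finset.inf'_le _ (Finset.mem_univ S)

lemma le_gms (p : Finset (Fin n) → Alt a b) (P : Profile n (Alt a b)) (x : Alt a b)
    (h : ∀ S : Finset (Fin n), x.val ≤ (bval p P S).val) : x.val ≤ (gms p P).val := by
  show x ≤ gms p P
  unfold gms
  exact Finset.le_inf' _ _ (fun S _ => h S)

lemma bval_le (p : Finset (Fin n) → Alt a b) (P : Profile n (Alt a b))
    (S : Finset (Fin n)) (y : ℕ) (hp : (p S).val ≤ y)
    (ht : ∀ j ∈ S, (top (P j)).val ≤ y) : (bval p P S).val ≤ y := by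
  have : ∀ z ∈ insert (p S) (S.image fun j => top (P j)), z ≤ (⟨(p S).val, (p S).2⟩ : Alt a b) → True := fun _ _ _ => trivial
  have hmem := Finset.max'_mem (insert (p S) (S.image fun j => top (P j)))
    (Finset.insert_nonempty _ _)
  rcases Finset.mem_insert.1 hmem with h | h
  · show ((insert (p S) (S.image fun j => top (P j))).max'
      (Finset.insert_nonempty _ _)).val ≤ y
    rw [h]; exact hp
  · obtain ⟨j, hj, hEq⟩ := Finset.mem_image.1 h
    show ((insert (p S) (S.image fun j => top (P j))).max'
      (Finset.insert_nonempty _ _)).val ≤ y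
    rw [← hEq]; exact ht j hj

lemma le_bval_p (p : Finset (Fin n) → Alt a b) (P : Profile n (Alt a b))
    (S : Finset (Fin n)) : (p S).val ≤ (bval p P S).val := by
  show p S ≤ bval p P S
  unfold bval
  exact Finset.le_max' _ _ (Finset.mem_insert_self _ _)

lemma le_bval_top (p : Finset (Fin n) → Alt a b) (P : Profile n (Alt a b))
    (S : Finset (Fin n)) (j : Fin n) (hj : j ∈ S) :
    (top (P j)).val ≤ (bval p P S).val := by
  show top (P j) ≤ bval p P S
  unfold bval
  exact Finset.le_max' _ _ (Finset.mem_insert_of_mem (Finset.mem_image_of_mem (fun j => top (P j)) hj))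

end Helpers

/-- Option sets of a generalized median voter scheme for an agent `i` with
`p_{N\{i}} ≤ p_{{i}}`. -/
theorem gms_optionSet {n a b : ℕ} [Nonempty (Alt a b)]
    (hn : 2 ≤ n) (hab : a ≤ b)
    (p : Finset (Fin n) → Alt a b) (hp : MonotonicFamily p) (i : Fin n)
    (hle : p (Finset.univ.erase i) ≤ p {i}) (L : LinearOrder (Alt a b)) :
    OptionSet (gms p) i L =
      if top L < p (Finset.univ.erase i) then
        Set.Icc (top L) (p {i})
      else if top L ≤ p {i} then
        Set.Icc (p (Finset.univ.erase i)) (p {i})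
      else Set.Icc (p (Finset.univ.erase i)) (top L) := by
  classical
  obtain ⟨hpN, hpE, hpMono⟩ := hp
  set t := top L with ht
  set e := p (Finset.univ.erase i) with he
  set s := p {i} with hs
  have hes : e.val ≤ s.val := hle
  -- membership characterization at the ℕ level
  have main_mp : ∀ P : Profile n (Alt a b), P i = L →
      min t.val e.val ≤ (gms p P).val ∧ (gms p P).val ≤ max t.val s.val := by
    intro P hPi
    constructor
    · refine le_gms p P ⟨min t.val e.val, ?_⟩ ?_
      · have h1 := t.2; have h2 := e.2
        simp only [Finset.mem_Icc] at h1 h2 ⊢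
        omega
      · intro S
        by_cases hiS : i ∈ S
        · have := le_bval_top p P S i hiS
          rw [hPi, ← ht] at this
          show min t.val e.val ≤ _
          omega
        · have hsub : S ⊆ Finset.univ.erase i := fun j hj =>
            Finset.mem_erase.2 ⟨fun h => hiS (h ▸ hj), Finset.mem_univ _⟩
          have h1 : e.val ≤ (p S).val := hpMono S (Finset.univ.erase i) hsub
          have h2 := le_bval_p p P S
          show min t.val e.val ≤ _
          omega
    · have h1 := gms_le_bval p P {i}
      have h2 : (bval p P {i}).val ≤ max t.val s.val := by
        refine bval_le p P {i} _ (le_max_right _ _) ?_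
        intro j hj
        have hji : j = i := Finset.mem_singleton.1 hj
        subst hji
        rw [hPi]
        exact le_max_left _ _
      omega
  have main_mpr : ∀ x : Alt a b, min t.val e.val ≤ x.val → x.val ≤ max t.val s.val →
      ∃ P : Profile n (Alt a b), P i = L ∧ gms p P = x := by
    intro x hl hr
    have hxmem := x.2
    simp only [Finset.mem_Icc] at hxmem
    refine ⟨fun j => if j = i then L else ordTop x, if_pos rfl, ?_⟩
    set P : Profile n (Alt a b) := fun j => if j = i then L else ordTop x with hP
    have hPj : ∀ j, j ≠ i → top (P j) = x := by
      intro j hj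
      have : P j = ordTop x := if_neg hj
      rw [this]
      exact ordTop_top x
    have hPi : P i = L := if_pos rfl
    have hPit : top (P i) = t := by rw [hPi]
    have hub : (gms p P).val ≤ x.val := by
      by_cases hxt : t.val ≤ x.val
      · have h1 := gms_le_bval p P Finset.univ
        have h2 : (bval p P Finset.univ).val ≤ x.val := by
          refine bval_le p P _ _ (by omega) ?_
          intro j _
          by_cases hji : j = i
          · subst hji; rw [hPit]; exact hxt
          · rw [hPj j hji]
        omega
      · have hex : e.val ≤ x.val := by omega
        have h1 := gms_le_bval p P (Finset.univ.erase i)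
        have h2 : (bval p P (Finset.univ.erase i)).val ≤ x.val := by
          refine bval_le p P _ _ hex ?_
          intro j hj
          rw [hPj j (Finset.mem_erase.1 hj).1]
        omega
    have hlb : x.val ≤ (gms p P).val := by
      refine le_gms p P x ?_
      intro S
      by_cases hS : ∃ j ∈ S, j ≠ i
      · obtain ⟨j, hjS, hji⟩ := hS
        have := le_bval_top p P S j hjS
        rw [hPj j hji] at this
        exact this
      · have hsub : S ⊆ {i} := by
          intro j hj
          refine Finset.mem_singleton.2 ?_
          by_contra hc
          exact hS ⟨j, hj, hc⟩
        rcases Finset.subset_singleton_iff.1 hsub with rfl | rfl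
        · have := le_bval_p p P ∅
          rw [hpE] at this
          omega
        · by_cases hxt : x.val ≤ t.val
          · have := le_bval_top p P {i} i (Finset.mem_singleton_self i)
            rw [hPit] at this
            omega
          · have := le_bval_p p P {i}
            rw [← hs] at this
            have hxs : x.val ≤ s.val := by omega
            omega
    exact Subtype.ext (le_antisymm hub hlb)
  have key : ∀ (lo hi : Alt a b), lo.val = min t.val e.val → hi.val = max t.val s.val →
      OptionSet (gms p) i L = Set.Icc lo hi := by
    intro lo hi hlo hhi
    ext x
    constructor
    · rintro ⟨P, hPi, rfl⟩
      obtain ⟨h1, h2⟩ := main_mp P hPi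
      exact ⟨show lo.val ≤ (gms p P).val by omega, show (gms p P).val ≤ hi.val by omega⟩
    · rintro ⟨h1, h2⟩
      have h1' : lo.val ≤ x.val := h1
      have h2' : x.val ≤ hi.val := h2
      exact main_mpr x (by omega) (by omega)
  split_ifs with h1 h2
  · have h1' : t.val < e.val := h1
    exact key t s (by omega) (by omega)
  · have h1' : ¬ t.val < e.val := h1
    have h2' : t.val ≤ s.val := h2
    exact key e s (by omega) (by omega)
  · have h1' : ¬ t.val < e.val := h1
    have h2' : ¬ t.val ≤ s.val := h2
    exact key e t (by omega) (by omega)
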